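/- arXiv:2212.07140 — 5 statements merged into one kernel-verified Lean document; each statement's English description precedes it below -/
import Mathlib

section
/- Let Γ be a finite simple graph with GF(2) edge weights ω. The subdivided graph Γ̃ (obtained by subdividing exactly the edges of weight 1) is bipartite if and only if every cycle c₁,...,c_ℓ in Γ satisfies Σᵢ ω(cᵢ) ≡ ℓ (mod 2). -/
/-- The graph obtained from `G` by subdividing every edge of `ω`-weight `1`
(replacing it by a path of length two through a fresh vertex indexed by the edge),
and keeping edges of weight `0` unchanged. -/
def subdiv {V : Type*} (G : SimpleGraph V) (ω : V → V → ZMod 2) :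
    SimpleGraph (V ⊕ Sym2 V) :=
  SimpleGraph.fromRel (fun a b =>
    match a, b with
    | Sum.inl u, Sum.inl v => G.Adj u v ∧ ω u v = 0
    | Sum.inl u, Sum.inr e => ∃ v, G.Adj u v ∧ ω u v = 1 ∧ e = s(u, v)
    | _, _ => False)

namespace SubdivAux

open SimpleGraph Walk

variable {V : Type*} {G : SimpleGraph V}

/-- The mod-2 "potential change" along a walk: length plus total weight. -/
def phi (ω : V → V → ZMod 2) {u v : V} (p : G.Walk u v) : ZMod 2 :=
  (p.length : ZMod 2) + (p.darts.map (fun d => ω d.fst d.snd)).sum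

lemma two_eq_zero : (2 : ZMod 2) = 0 := rfl

lemma phi_nil (ω : V → V → ZMod 2) (v : V) : phi ω (Walk.nil : G.Walk v v) = 0 := by
  simp [phi]

lemma phi_cons (ω : V → V → ZMod 2) {u v w : V} (h : G.Adj u v) (p : G.Walk v w) :
    phi ω (Walk.cons h p) = 1 + ω u v + phi ω p := by
  simp only [phi, Walk.length_cons, Walk.darts_cons, List.map_cons, List.sum_cons]
  push_cast
  ring

lemma phi_append (ω : V → V → ZMod 2) {u v w : V} (p : G.Walk u v) (q : G.Walk v w) :
    phi ω (p.append q) = phi ω p + phi ω q := by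
  simp only [phi, Walk.length_append, Walk.darts_append, List.map_append, List.sum_append]
  push_cast
  ring

lemma phi_copy (ω : V → V → ZMod 2) {u v u' v' : V} (p : G.Walk u v) (hu : u = u') (hv : v = v') :
    phi ω (p.copy hu hv) = phi ω p := by
  subst hu; subst hv; rfl

lemma phi_reverse (ω : V → V → ZMod 2) (hω : ∀ i j, ω i j = ω j i) {u v : V} (p : G.Walk u v) :
    phi ω p.reverse = phi ω p := by
  simp only [phi, Walk.length_reverse, Walk.darts_reverse, List.map_reverse, List.sum_reverse,
    List.map_map]
  congr 1
  have : ((fun d => ω d.fst d.snd) ∘ SimpleGraph.Dart.symm : G.Dart → ZMod 2)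
      = fun d => ω d.fst d.snd := by
    funext d
    exact hω d.snd d.fst
  rw [this]

/-- Splitting a closed walk that visits its basepoint again in the interior. -/
lemma exists_split [DecidableEq V] (ω : V → V → ZMod 2) {w : V} (p : G.Walk w w)
    (hc : 2 ≤ p.support.tail.count w) :
    ∃ (c1 c2 : G.Walk w w), c1.length + c2.length = p.length ∧ 1 ≤ c1.length ∧ 1 ≤ c2.length ∧
      phi ω c1 + phi ω c2 = phi ω p := by
  classical
  cases p with
  | nil => simp at hc
  | @cons _ x _ h q =>
    have hc' : 2 ≤ q.support.count w := by simpa using hc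
    have hw : w ∈ q.support := List.count_pos_iff.mp (by omega)
    have hts := q.take_spec hw
    have h1 : (q.takeUntil w hw).support.count w = 1 := q.count_support_takeUntil_eq_one hw
    have hcount : 1 ≤ (q.dropUntil w hw).support.tail.count w := by
      have heq : q.support.count w
          = ((q.takeUntil w hw).support ++ (q.dropUntil w hw).support.tail).count w := by
        conv_lhs => rw [← hts]
        rw [Walk.support_append]
      rw [heq, List.count_append, h1] at hc'
      omega
    have hdnil : 1 ≤ (q.dropUntil w hw).length := by
      have hne : (q.dropUntil w hw).support.tail ≠ [] := by
        intro h0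
        rw [h0] at hcount
        simp at hcount
      have hnn : ¬ (q.dropUntil w hw).Nil := by
        intro hn
        exact hne (by rw [hn.eq_nil]; simp)
      exact Walk.not_nil_iff_lt_length.mp hnn
    refine ⟨Walk.cons h (q.takeUntil w hw), q.dropUntil w hw, ?_, by simp, hdnil, ?_⟩
    · have := congrArg Walk.length hts
      rw [Walk.length_append] at this
      simp only [Walk.length_cons]
      omega
    · conv_rhs => rw [show Walk.cons h q = (Walk.cons h (q.takeUntil w hw)).append
        (q.dropUntil w hw) by rw [Walk.cons_append, hts]]
      rw [phi_append]

lemma zmod2_cases : ∀ a : ZMod 2, a = 0 ∨ a = 1 := by decide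
lemma zmod2_add_eq_zero : ∀ a b : ZMod 2, a + b = 0 → a = b := by decide
lemma zmod2_ne_iff : ∀ a b : ZMod 2, a ≠ b ↔ a = b + 1 := by decide

/-- Any closed walk has zero potential, given the cycle-parity hypothesis. -/
lemma phi_closed (ω : V → V → ZMod 2) (hω : ∀ i j, ω i j = ω j i)
    (H : ∀ (v : V) (p : G.Walk v v), p.IsCycle →
      (p.darts.map (fun d => ω d.fst d.snd)).sum = (p.length : ZMod 2)) :
    ∀ (N : ℕ) ⦃v : V⦄ (p : G.Walk v v), p.length = N → phi ω p = 0 := by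
  classical
  intro N
  induction N using Nat.strong_induction_on with
  | _ N IH =>
    intro v p hl
    cases p with
    | nil => simp [phi]
    | @cons _ u _ h q =>
      by_cases hq : q.IsPath
      · by_cases he : s(v, u) ∈ q.edges
        · -- the edge is reused: the walk must be v-u-v
          cases q with
          | nil => simp at he
          | @cons _ x _ h₂ q₂ =>
            rw [Walk.edges_cons, List.mem_cons] at he
            rcases he with he | he
            · have hx : x = v := by
                rw [Sym2.eq_iff] at he
                rcases he with ⟨hvu, -⟩ | ⟨hvx, -⟩
                · exact absurd hvu h.ne
                · exact hvx.symm
              subst hx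
              have hnil : q₂ = Walk.nil := by
                cases q₂ with
                | nil => rfl
                | cons h₃ q₃ =>
                  exfalso
                  have := hq.support_nodup
                  simp only [Walk.support_cons, List.nodup_cons] at this
                  exact this.2.1 (by simp [Walk.end_mem_support])
              subst hnil
              simp only [phi_cons, phi_nil, add_zero]
              rw [hω u]
              exact (by decide : ∀ a : ZMod 2, 1 + a + (1 + a) = 0) _
            · exfalso
              have hu : u ∈ q₂.support := by
                have : s(u, v) ∈ q₂.edges := by rwa [Sym2.eq_swap] at he
                exact Walk.fst_mem_support_of_mem_edges q₂ this
              have := hq.support_nodup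
              simp only [Walk.support_cons, List.nodup_cons] at this
              exact this.1 hu
        · -- it's a cycle
          have hc : (Walk.cons h q).IsCycle := (Walk.cons_isCycle_iff q h).mpr ⟨hq, he⟩
          have := H _ (Walk.cons h q) hc
          unfold phi
          rw [this]
          exact (by decide : ∀ a : ZMod 2, a + a = 0) _
      · -- there is a repeated vertex; rotate and split
        have hnd : ¬ q.support.Nodup := fun hn => hq (Walk.IsPath.mk' hn)
        obtain ⟨w, hwdup⟩ := List.exists_duplicate_iff_not_nodup.mpr hnd
        have hwc : 2 ≤ q.support.count w := List.duplicate_iff_two_le_count.mp hwdup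
        have hwp : w ∈ (Walk.cons h q).support := by
          rw [Walk.support_cons]
          exact List.mem_cons_of_mem _ (List.count_pos_iff.mp (by omega))
        have hdarts := (Walk.cons h q).rotate_darts w hwp
        have hlen : ((Walk.cons h q).rotate w hwp).length = (Walk.cons h q).length := by
          rw [← Walk.length_darts, ← Walk.length_darts]
          exact hdarts.perm.length_eq
        have hphi : phi ω ((Walk.cons h q).rotate w hwp) = phi ω (Walk.cons h q) := by
          unfold phi
          rw [hlen, (hdarts.perm.map _).sum_eq]
        have hsupp := (Walk.cons h q).support_rotate w hwp
        have hcount : 2 ≤ ((Walk.cons h q).rotate w hwp).support.tail.count w := by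
          rw [hsupp.perm.count_eq]
          simpa using hwc
        obtain ⟨c1, c2, hsum, h1, h2, hphi2⟩ := exists_split ω _ hcount
        rw [← hphi, ← hphi2]
        have hN : ((Walk.cons h q).rotate w hwp).length = N := by rw [hlen, hl]
        rw [IH c1.length (by omega) c1 rfl, IH c2.length (by omega) c2 rfl, add_zero]

lemma phi_congr (ω : V → V → ZMod 2) (hω : ∀ i j, ω i j = ω j i)
    (H : ∀ (v : V) (p : G.Walk v v), p.IsCycle →
      (p.darts.map (fun d => ω d.fst d.snd)).sum = (p.length : ZMod 2))
    {a b : V} (p q : G.Walk a b) : phi ω p = phi ω q := by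
  have h0 := phi_closed ω hω H (p.append q.reverse).length (p.append q.reverse) rfl
  rw [phi_append, phi_reverse ω hω] at h0
  exact zmod2_add_eq_zero _ _ h0

lemma reach_out (G : SimpleGraph V) (v : V) :
    G.Reachable (G.connectedComponentMk v).out v :=
  SimpleGraph.ConnectedComponent.eq.mp ((G.connectedComponentMk v).out_eq)

/-- A choice of mod-2 potential for each vertex. -/
noncomputable def pot (G : SimpleGraph V) (ω : V → V → ZMod 2) (v : V) : ZMod 2 :=
  phi ω (reach_out G v).some

lemma pot_adj (ω : V → V → ZMod 2) (hω : ∀ i j, ω i j = ω j i)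
    (H : ∀ (v : V) (p : G.Walk v v), p.IsCycle →
      (p.darts.map (fun d => ω d.fst d.snd)).sum = (p.length : ZMod 2))
    {u w : V} (h : G.Adj u w) : pot G ω w = pot G ω u + 1 + ω u w := by
  have hmk : G.connectedComponentMk u = G.connectedComponentMk w :=
    SimpleGraph.ConnectedComponent.sound h.reachable
  have hout : (G.connectedComponentMk u).out = (G.connectedComponentMk w).out := by rw [hmk]
  have hcon : pot G ω w
      = phi ω (((reach_out G u).some.copy hout rfl).append (Walk.cons h Walk.nil)) :=
    phi_congr ω hω H _ _
  rw [hcon, phi_append, phi_copy, phi_cons, phi_nil, add_zero]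
  unfold pot
  ring

end SubdivAux

open SubdivAux in
theorem subdiv_bipartite_iff_cycle_parity {n : ℕ} (G : SimpleGraph (Fin n))
    (ω : Fin n → Fin n → ZMod 2) (hω : ∀ i j, ω i j = ω j i) :
    (subdiv G ω).Colorable 2 ↔
    (∀ (v : Fin n) (p : G.Walk v v), p.IsCycle →
        (p.darts.map (fun d => ω d.fst d.snd)).sum = (p.length : ZMod 2)) := by
  classical
  constructor
  · rintro ⟨C⟩ v p hp
    let g : (Fin n ⊕ Sym2 (Fin n)) → ZMod 2 := fun x => C x
    have step : ∀ u w : Fin n, G.Adj u w →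
        g (Sum.inl w) = g (Sum.inl u) + 1 + ω u w := by
      intro u w huw
      rcases zmod2_cases (ω u w) with h0 | h1
      · have hadj : (subdiv G ω).Adj (Sum.inl u) (Sum.inl w) := by
          rw [subdiv, SimpleGraph.fromRel_adj]
          exact ⟨by simp [huw.ne], Or.inl ⟨huw, h0⟩⟩
        have hne : g (Sum.inl w) ≠ g (Sum.inl u) := fun hh => C.valid hadj hh.symm
        rw [h0, add_zero]
        exact (zmod2_ne_iff _ _).mp hne
      · have hadj1 : (subdiv G ω).Adj (Sum.inl u) (Sum.inr s(u, w)) := by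
          rw [subdiv, SimpleGraph.fromRel_adj]
          exact ⟨by simp, Or.inl ⟨w, huw, h1, rfl⟩⟩
        have hadj2 : (subdiv G ω).Adj (Sum.inl w) (Sum.inr s(u, w)) := by
          rw [subdiv, SimpleGraph.fromRel_adj]
          exact ⟨by simp, Or.inl ⟨u, huw.symm, (hω u w).symm.trans h1, Sym2.eq_swap⟩⟩
        have hne1 : g (Sum.inl u) ≠ g (Sum.inr s(u, w)) := fun hh => C.valid hadj1 hh
        have hne2 : g (Sum.inl w) ≠ g (Sum.inr s(u, w)) := fun hh => C.valid hadj2 hh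
        have heq : g (Sum.inl w) = g (Sum.inl u) :=
          (by decide : ∀ a b c : ZMod 2, a ≠ c → b ≠ c → b = a) _ _ _ hne1 hne2
        rw [heq, h1]
        exact (by decide : ∀ a : ZMod 2, a = a + 1 + 1) _
    have walkstep : ∀ (a b : Fin n) (q : G.Walk a b),
        g (Sum.inl b) = g (Sum.inl a) + phi ω q := by
      intro a b q
      induction q with
      | nil => rw [phi_nil, add_zero]
      | cons h q ih =>
        rw [ih, phi_cons, step _ _ h]
        ring
    have h0 : phi ω p = 0 := by
      have := walkstep v v p
      exact left_eq_add.mp this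
    unfold phi at h0
    exact (zmod2_add_eq_zero _ _ h0).symm
  · intro H
    refine ⟨SimpleGraph.Coloring.mk
      (fun x => ((match x with
        | Sum.inl v => pot G ω v
        | Sum.inr e => Sym2.lift ⟨fun a b => pot G ω a * pot G ω b + 1,
            fun a b => by ring⟩ e) : ZMod 2)) ?_⟩
    intro a b hadj
    rw [subdiv, SimpleGraph.fromRel_adj] at hadj
    obtain ⟨hne, hrel⟩ := hadj
    rcases a with u | e <;> rcases b with w | e'
    · rcases hrel with ⟨huw, h0⟩ | ⟨hwu, h0⟩
      · show pot G ω u ≠ pot G ω w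
        rw [pot_adj ω hω H huw, h0, add_zero]
        exact (by decide : ∀ a : ZMod 2, a ≠ a + 1) _
      · show pot G ω u ≠ pot G ω w
        rw [pot_adj ω hω H hwu, h0, add_zero]
        exact (by decide : ∀ a : ZMod 2, a + 1 ≠ a) _
    · rcases hrel with ⟨x, hux, h1, he⟩ | hf
      · subst he
        show pot G ω u ≠ Sym2.lift _ s(u, x)
        rw [Sym2.lift_mk]
        have hx : pot G ω x = pot G ω u + 1 + 1 := by
          rw [pot_adj ω hω H hux, h1]
        exact (by decide : ∀ a b : ZMod 2, b = a + 1 + 1 → a ≠ a * b + 1) _ _ hx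
      · exact absurd hf id
    · rcases hrel with hf | ⟨x, hwx, h1, he⟩
      · exact absurd hf id
      · subst he
        show Sym2.lift _ s(w, x) ≠ pot G ω w
        rw [Sym2.lift_mk]
        have hx : pot G ω x = pot G ω w + 1 + 1 := by
          rw [pot_adj ω hω H hwx, h1]
        exact (by decide : ∀ a b : ZMod 2, b = a + 1 + 1 → a * b + 1 ≠ a) _ _ hx
    · rcases hrel with hf | hf <;> exact absurd hf id
end

section
/- The 6×6 symmetric matrix M over GF(2) given by rows m₁=(0,0,1,1,1,1), m₂=(0,0,1,1,1,0), m₃=(1,1,0,1,1,1), m₄=(1,1,0,0,1,1), m₅=(1,1,1,1,0,0), m₆=(1,1,1,1,0,0) (interpreted as the interlacement matrix of the Gauss code 123451632654) admits no diagonal matrix D over GF(2) with (M+D)² = M+D; equivalently, the system m_{i,j}Xᵢ + m_{i,j}Xⱼ = ⟨mᵢ,mⱼ⟩ + m_{i,j} has no GF(2) solution. -/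
private def Mc : Matrix (Fin 6) (Fin 6) (ZMod 2) :=
  !![0,0,1,1,1,1;
     0,0,1,1,1,0;
     1,1,0,1,1,1;
     1,1,0,0,1,1;
     1,1,1,1,0,0;
     1,1,1,1,0,0]

private lemma aux1 : ∀ d : Fin 6 → ZMod 2,
    ¬ ((Mc + Matrix.diagonal d) * (Mc + Matrix.diagonal d) = Mc + Matrix.diagonal d) := by
  decide

private lemma aux2 : ¬ ∃ X : Fin 6 → ZMod 2, ∀ i j,
    Mc i j * X i + Mc i j * X j = (∑ k, Mc i k * Mc j k) + Mc i j := by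
  decide

theorem counterexample_code_123451632654_not_realizable :
    let M : Matrix (Fin 6) (Fin 6) (ZMod 2) :=
      !![0,0,1,1,1,1;
         0,0,1,1,1,0;
         1,1,0,1,1,1;
         1,1,0,0,1,1;
         1,1,1,1,0,0;
         1,1,1,1,0,0]
    (¬ ∃ D : Matrix (Fin 6) (Fin 6) (ZMod 2), (∀ i j, i ≠ j → D i j = 0) ∧
        (M + D) * (M + D) = M + D) ∧
    (¬ ∃ X : Fin 6 → ZMod 2, ∀ i j,
        M i j * X i + M i j * X j = (∑ k, M i k * M j k) + M i j) := by
  intro M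
  constructor
  · rintro ⟨D, hdiag, hsq⟩
    have hD : D = Matrix.diagonal (fun i => D i i) := by
      ext i j
      by_cases h : i = j
      · subst h; simp
      · simp [Matrix.diagonal_apply_ne _ h, hdiag i j h]
    rw [hD] at hsq
    exact aux1 (fun i => D i i) hsq
  · exact aux2
end

section
/- Let M be a symmetric n×n matrix over GF(2) with zero diagonal. If M² = 0 and the graph with adjacency matrix M contains a triangle (vertices i,j,k pairwise adjacent), then there is no diagonal matrix D over GF(2) with (M+D)² = M+D. -/
theorem no_D_of_sq_zero_and_triangle {n : ℕ} (M : Matrix (Fin n) (Fin n) (ZMod 2))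
    (hsymm : M.transpose = M) (hdiag : ∀ i, M i i = 0)
    (hsq : M * M = 0)
    (i j k : Fin n) (hij : i ≠ j) (hjk : j ≠ k) (hik : i ≠ k)
    (eij : M i j = 1) (ejk : M j k = 1) (eik : M i k = 1) :
    ¬ ∃ D : Matrix (Fin n) (Fin n) (ZMod 2), (∀ a b, a ≠ b → D a b = 0) ∧
        (M + D) * (M + D) = M + D := by
  rintro ⟨D, hD, heq⟩
  have key : ∀ a b : Fin n, a ≠ b → M a b = 1 → D a a + D b b = 1 := by
    intro a b hab hM
    have h1 : ((M + D) * (M + D)) a b = (M + D) a b := by rw [heq]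
    rw [Matrix.add_mul, Matrix.mul_add, Matrix.mul_add, hsq] at h1
    have hMD : (M * D) a b = M a b * D b b := by
      rw [Matrix.mul_apply]
      apply Finset.sum_eq_single b
      · intro x _ hx
        rw [hD x b hx, mul_zero]
      · intro hb; exact absurd (Finset.mem_univ b) hb
    have hDM : (D * M) a b = D a a * M a b := by
      rw [Matrix.mul_apply]
      apply Finset.sum_eq_single a
      · intro x _ hx
        rw [hD a x (Ne.symm hx), zero_mul]
      · intro ha; exact absurd (Finset.mem_univ a) ha
    have hDD : (D * D) a b = 0 := by
      rw [Matrix.mul_apply]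
      apply Finset.sum_eq_zero
      intro x _
      by_cases hx : x = b
      · subst hx; rw [hD a x hab, zero_mul]
      · rw [hD x b hx, mul_zero]
    simp only [Matrix.add_apply, Matrix.zero_apply, hMD, hDM, hDD, hM, hD a b hab] at h1
    linear_combination h1
  have h1 := key i j hij eij
  have h2 := key j k hjk ejk
  have h3 := key i k hik eik
  have : ∀ a b c : ZMod 2, a + b = 1 → b + c = 1 → a + c = 1 → False := by decide
  exact this _ _ _ h1 h2 h3
end

section
/- Let M be a symmetric n×n matrix over GF(2) with zero diagonal. Suppose M² = 0. Then a diagonal matrix D with (M+D)² = M+D exists if and only if the graph with adjacency matrix M is bipartite. -/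
private lemma zmod2_add_eq_one_ne : ∀ x y : ZMod 2, x + y = 1 → x ≠ y := by decide

private lemma zmod2_ne_add_eq_one : ∀ x y : ZMod 2, x ≠ y → x + y = 1 := by decide

private lemma zmod2_mul_self : ∀ x : ZMod 2, x * x = x := by decide

theorem stz_iff_bipartite_of_sq_zero {n : ℕ} (M : Matrix (Fin n) (Fin n) (ZMod 2))
    (hsymm : M.transpose = M) (hdiag : ∀ i, M i i = 0)
    (hsq : M * M = 0)
    (G : SimpleGraph (Fin n)) (hadj : ∀ i j, G.Adj i j ↔ M i j = 1) :
    (∃ D : Matrix (Fin n) (Fin n) (ZMod 2), (∀ a b, a ≠ b → D a b = 0) ∧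
        (M + D) * (M + D) = M + D) ↔ G.Colorable 2 := by
  constructor
  · rintro ⟨D, hD0, hDsq⟩
    set d : Fin n → ZMod 2 := fun i => D i i with hd
    have hDdiag : D = Matrix.diagonal d := by
      ext a b
      by_cases hab : a = b
      · subst hab; simp [Matrix.diagonal_apply_eq, hd]
      · rw [hD0 a b hab, Matrix.diagonal_apply_ne _ hab]
    rw [hDdiag] at hDsq
    have hexp : (M + Matrix.diagonal d) * (M + Matrix.diagonal d)
        = M * M + (M * Matrix.diagonal d + (Matrix.diagonal d * M
          + Matrix.diagonal d * Matrix.diagonal d)) := by noncomm_ring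
    rw [hexp, hsq, zero_add] at hDsq
    refine ⟨SimpleGraph.Coloring.mk (fun i => if d i = 0 then 0 else 1) ?_⟩
    intro i j hij
    have hM : M i j = 1 := (hadj i j).1 hij
    have hne : i ≠ j := hij.ne
    have h := congrFun (congrFun hDsq i) j
    simp only [Matrix.add_apply, Matrix.mul_diagonal, Matrix.diagonal_mul,
      Matrix.diagonal_mul_diagonal, Matrix.diagonal_apply_ne _ hne, hM,
      one_mul, mul_one, add_zero] at h
    have hxy : d j ≠ d i := zmod2_add_eq_one_ne _ _ h
    show (if d i = 0 then (0 : Fin 2) else 1) ≠ (if d j = 0 then 0 else 1)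
    have hone : ∀ x : ZMod 2, x ≠ 0 → x = 1 := by decide
    by_cases h1 : d i = 0 <;> by_cases h2 : d j = 0
    · exact absurd (h2.trans h1.symm) hxy
    · simp [h1, h2]
    · simp [h1, h2]
    · exact absurd ((hone _ h2).trans (hone _ h1).symm) hxy
  · rintro ⟨C⟩
    set d : Fin n → ZMod 2 := fun i => if C i = 0 then 0 else 1 with hd
    refine ⟨Matrix.diagonal d, fun a b hab => Matrix.diagonal_apply_ne _ hab, ?_⟩
    have hexp : (M + Matrix.diagonal d) * (M + Matrix.diagonal d)
        = M * M + (M * Matrix.diagonal d + (Matrix.diagonal d * M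
          + Matrix.diagonal d * Matrix.diagonal d)) := by noncomm_ring
    rw [hexp, hsq, zero_add]
    ext i j
    by_cases hij : i = j
    · subst hij
      simp [Matrix.mul_diagonal, Matrix.diagonal_mul, Matrix.diagonal_mul_diagonal,
        hdiag i, zmod2_mul_self]
    · simp only [Matrix.add_apply, Matrix.mul_diagonal, Matrix.diagonal_mul,
        Matrix.diagonal_mul_diagonal, Matrix.diagonal_apply_ne _ hij, add_zero]
      by_cases hM : M i j = 1
      · have hAdj : G.Adj i j := (hadj i j).2 hM
        have hC : C i ≠ C j := C.valid hAdj
        have hdne : d i ≠ d j := by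
          simp only [hd]
          by_cases h1 : C i = 0 <;> by_cases h2 : C j = 0 <;> simp_all <;> omega
        have := zmod2_ne_add_eq_one _ _ hdne
        rw [hM, mul_one, one_mul]
        rw [add_comm] at this
        rw [this]
      · have hM0 : M i j = 0 := by
          have : ∀ x : ZMod 2, x ≠ 1 → x = 0 := by decide
          exact this _ hM
        rw [hM0, zero_mul, mul_zero, add_zero]
end

section
/- The 9×9 symmetric matrix M over GF(2) which is the adjacency matrix of the interlacement graph of the Gauss code 078435687216504312 (chords 0–8, with chord pairs interlaced as determined by this double occurrence word) satisfies: every row has an even number of ones, and ⟨mᵢ,mⱼ⟩ = 0 whenever m_{i,j} = 0, and for every triple of pairwise adjacent vertices i,j,k: ⟨mᵢ,mⱼ⟩ + ⟨mᵢ,m_k⟩ + ⟨mⱼ,m_k⟩ = 1 in GF(2); yet there is no diagonal matrix D over GF(2) with (M+D)² = M+D. -/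
set_option maxRecDepth 10000

theorem nine_chord_counterexample :
    let M : Matrix (Fin 9) (Fin 9) (ZMod 2) :=
      !![0,1,1,1,1,0,0,0,0;
         1,0,1,1,1,1,1,0,0;
         1,1,0,1,1,1,1,0,0;
         1,1,1,0,1,0,0,1,1;
         1,1,1,1,0,0,0,1,1;
         0,1,1,0,0,0,0,1,1;
         0,1,1,0,0,0,0,1,1;
         0,0,0,1,1,1,1,0,0;
         0,0,0,1,1,1,1,0,0]
    (∀ i, (∑ j, M i j) = 0) ∧
    (∀ i j, M i j = 0 → (∑ k, M i k * M j k) = 0) ∧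
    (∀ i j k, M i j = 1 → M i k = 1 → M j k = 1 →
        (∑ l, M i l * M j l) + (∑ l, M i l * M k l) + (∑ l, M j l * M k l) = 1) ∧
    (¬ ∃ D : Matrix (Fin 9) (Fin 9) (ZMod 2), (∀ a b, a ≠ b → D a b = 0) ∧
        (M + D) * (M + D) = M + D) := by
  intro M
  refine ⟨by decide, @of_decide_eq_true _ (@Fintype.decidableForallFintype _ _ (fun i => @Fintype.decidableForallFintype _ _ (fun j => inferInstance) _) _) rfl, @of_decide_eq_true _ (@Fintype.decidableForallFintype _ _ (fun i => @Fintype.decidableForallFintype _ _ (fun j => @Fintype.decidableForallFintype _ _ (fun k => inferInstance) _) _) _) rfl, ?_⟩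
  rintro ⟨D, hD, hsq⟩
  have hDd : D = Matrix.diagonal (fun i => D i i) := by
    ext a b
    by_cases h : a = b
    · subst h; simp [Matrix.diagonal]
    · simp [Matrix.diagonal, h, hD a b h]
  have key : ∃ d : Fin 9 → ZMod 2,
      (M + Matrix.diagonal d) * (M + Matrix.diagonal d) = M + Matrix.diagonal d :=
    ⟨fun i => D i i, by rw [← hDd]; exact hsq⟩
  revert key
  decide
end
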